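/- Let A and B be integral domains, f : A → B a non-injective ring homomorphism, and J an ideal of B. Then A ⋈^f J is an elementary divisor ring if and only if either (J = 0 and A is an elementary divisor ring) or (J = B and both A and B are elementary divisor rings). -/
import Mathlib


/-- A commutative ring is an elementary divisor ring if every square matrix is
equivalent to a diagonal matrix via invertible matrices. -/
def IsElementaryDivisorRing (R : Type*) [CommRing R] : Prop :=
  ∀ (n : ℕ) (M : Matrix (Fin n) (Fin n) R),
    ∃ P Q : Matrix (Fin n) (Fin n) R, IsUnit P ∧ IsUnit Q ∧
      ∃ d : Fin n → R, P * M * Q = Matrix.diagonal d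

/-- A commutative ring is Hermite if any pair `a, b` can be written `a = a₁d`,
`b = b₁d` with `Ra₁ + Rb₁ = R`. -/
def IsHermiteRing (R : Type*) [CommRing R] : Prop :=
  ∀ a b : R, ∃ a₁ b₁ d : R, a = a₁ * d ∧ b = b₁ * d ∧ Ideal.span {a₁, b₁} = ⊤

/-- The amalgamation `A ⋈^f J = {(a, f a + j) | a ∈ A, j ∈ J}` as a subring of `A × B`. -/
def amalgamation {A B : Type*} [CommRing A] [CommRing B] (f : A →+* B) (J : Ideal B) :
    Subring (A × B) where
  carrier := {p | p.2 - f p.1 ∈ J}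
  mul_mem' := by
    intro p q hp hq
    have h : (p * q).2 - f (p * q).1
        = p.2 * (q.2 - f q.1) + f q.1 * (p.2 - f p.1) := by
      simp only [Prod.fst_mul, Prod.snd_mul, map_mul]; ring
    show (p * q).2 - f (p * q).1 ∈ J
    rw [h]
    exact J.add_mem (J.mul_mem_left _ hq) (J.mul_mem_left _ hp)
  one_mem' := by simp
  add_mem' := by
    intro p q hp hq
    have h : (p + q).2 - f (p + q).1 = (p.2 - f p.1) + (q.2 - f q.1) := by
      simp only [Prod.fst_add, Prod.snd_add, map_add]; ring
    show (p + q).2 - f (p + q).1 ∈ J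
    rw [h]
    exact J.add_mem hp hq
  zero_mem' := by simp
  neg_mem' := by
    intro p hp
    have h : (-p).2 - f (-p).1 = -(p.2 - f p.1) := by
      simp only [Prod.fst_neg, Prod.snd_neg, map_neg]; ring
    show (-p).2 - f (-p).1 ∈ J
    rw [h]
    exact J.neg_mem hp

/-- The subring `f(A) + J` of `B`. -/
def rangeAddIdeal {A B : Type*} [CommRing A] [CommRing B] (f : A →+* B) (J : Ideal B) :
    Subring B where
  carrier := {b | ∃ a, b - f a ∈ J}
  mul_mem' := by
    rintro b b' ⟨a, ha⟩ ⟨a', ha'⟩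
    refine ⟨a * a', ?_⟩
    have h : b * b' - f (a * a') = b * (b' - f a') + f a' * (b - f a) := by
      simp only [map_mul]; ring
    show b * b' - f (a * a') ∈ J
    rw [h]
    exact J.add_mem (J.mul_mem_left _ ha') (J.mul_mem_left _ ha)
  one_mem' := ⟨1, by simp⟩
  add_mem' := by
    rintro b b' ⟨a, ha⟩ ⟨a', ha'⟩
    refine ⟨a + a', ?_⟩
    have h : b + b' - f (a + a') = (b - f a) + (b' - f a') := by
      simp only [map_add]; ring
    show b + b' - f (a + a') ∈ J
    rw [h]
    exact J.add_mem ha ha'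
  zero_mem' := ⟨0, by simp⟩
  neg_mem' := by
    rintro b ⟨a, ha⟩
    refine ⟨-a, ?_⟩
    have h : -b - f (-a) = -(b - f a) := by simp only [map_neg]; ring
    show -b - f (-a) ∈ J
    rw [h]
    exact J.neg_mem ha


lemma edr_of_equiv {R S : Type*} [CommRing R] [CommRing S] (e : R ≃+* S)
    (h : IsElementaryDivisorRing R) : IsElementaryDivisorRing S := by
  intro n M
  obtain ⟨P, Q, hP, hQ, d, hd⟩ := h n (M.map e.symm)
  refine ⟨P.map e, Q.map e, ?_, ?_, fun i => e (d i), ?_⟩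
  · simpa [RingHom.mapMatrix_apply] using hP.map (e : R →+* S).mapMatrix
  · simpa [RingHom.mapMatrix_apply] using hQ.map (e : R →+* S).mapMatrix
  · have := congrArg (fun X : Matrix (Fin n) (Fin n) R => X.map (e : R →+* S)) hd
    simp only [Matrix.map_mul] at this
    rw [show (M.map e.symm).map (e : R →+* S) = M by ext i j; simp] at this
    rw [Matrix.diagonal_map (by simp)] at this
    exact this

lemma edr_of_surjective {R S : Type*} [CommRing R] [CommRing S] (g : R →+* S)
    (hg : Function.Surjective g) (h : IsElementaryDivisorRing R) :
    IsElementaryDivisorRing S := by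
  intro n M
  have hex : ∀ i j, ∃ r, g r = M i j := fun i j => hg _
  choose N hN using hex
  obtain ⟨P, Q, hP, hQ, d, hd⟩ := h n (Matrix.of N)
  refine ⟨P.map g, Q.map g, ?_, ?_, fun i => g (d i), ?_⟩
  · simpa [RingHom.mapMatrix_apply] using hP.map g.mapMatrix
  · simpa [RingHom.mapMatrix_apply] using hQ.map g.mapMatrix
  · have := congrArg (fun X : Matrix (Fin n) (Fin n) R => X.map g) hd
    simp only [Matrix.map_mul] at this
    rw [show (Matrix.of N).map g = M by ext i j; simp [hN]] at this
    rw [Matrix.diagonal_map (by simp)] at this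
    exact this

lemma edr_prod {A B : Type*} [CommRing A] [CommRing B]
    (hA : IsElementaryDivisorRing A) (hB : IsElementaryDivisorRing B) :
    IsElementaryDivisorRing (A × B) := by
  intro n M
  obtain ⟨P₁, Q₁, hP₁, hQ₁, d₁, h₁⟩ := hA n (M.map (RingHom.fst A B))
  obtain ⟨P₂, Q₂, hP₂, hQ₂, d₂, h₂⟩ := hB n (M.map (RingHom.snd A B))
  set pair : Matrix (Fin n) (Fin n) A → Matrix (Fin n) (Fin n) B →
      Matrix (Fin n) (Fin n) (A × B) := fun X Y => Matrix.of fun i j => (X i j, Y i j) with hpair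
  have hfst : ∀ X Y, (pair X Y).map (RingHom.fst A B) = X := fun X Y => by ext i j; rfl
  have hsnd : ∀ X Y, (pair X Y).map (RingHom.snd A B) = Y := fun X Y => by ext i j; rfl
  have hext : ∀ (U V : Matrix (Fin n) (Fin n) (A × B)),
      U.map (RingHom.fst A B) = V.map (RingHom.fst A B) →
      U.map (RingHom.snd A B) = V.map (RingHom.snd A B) → U = V := by
    intro U V h1 h2
    ext i j
    · exact congrFun (congrFun h1 i) j
    · exact congrFun (congrFun h2 i) j
  have hmul : ∀ X Y X' Y', pair X Y * pair X' Y' = pair (X * X') (Y * Y') := by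
    intro X Y X' Y'
    refine hext _ _ ?_ ?_
    · rw [Matrix.map_mul, hfst, hfst, hfst]
    · rw [Matrix.map_mul, hsnd, hsnd, hsnd]
  have hone : pair 1 1 = 1 := by
    refine hext _ _ ?_ ?_
    · rw [hfst, Matrix.map_one _ rfl rfl]
    · rw [hsnd, Matrix.map_one _ rfl rfl]
  have hM : pair (M.map (RingHom.fst A B)) (M.map (RingHom.snd A B)) = M := by
    ext i j <;> rfl
  have hunit : ∀ (X : Matrix (Fin n) (Fin n) A) (Y : Matrix (Fin n) (Fin n) B),
      IsUnit X → IsUnit Y → IsUnit (pair X Y) := by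
    intro X Y hX hY
    rw [isUnit_iff_exists] at hX hY ⊢
    obtain ⟨X', hX1, hX2⟩ := hX
    obtain ⟨Y', hY1, hY2⟩ := hY
    exact ⟨pair X' Y', by rw [hmul, hX1, hY1, hone], by rw [hmul, hX2, hY2, hone]⟩
  refine ⟨pair P₁ P₂, pair Q₁ Q₂, hunit _ _ hP₁ hP₂, hunit _ _ hQ₁ hQ₂,
    fun i => (d₁ i, d₂ i), ?_⟩
  have : pair P₁ P₂ * M * pair Q₁ Q₂
      = pair (P₁ * M.map (RingHom.fst A B) * Q₁) (P₂ * M.map (RingHom.snd A B) * Q₂) := by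
    rw [← hM, hmul, hmul, hM]
  rw [this, h₁, h₂]
  ext i j <;> by_cases h : i = j <;> simp [hpair, Matrix.diagonal_apply, h]

lemma mem_amalgamation {A B : Type*} [CommRing A] [CommRing B] (f : A →+* B) (J : Ideal B)
    (p : A × B) : p ∈ amalgamation f J ↔ p.2 - f p.1 ∈ J := Iff.rfl

/-- `A ≃+* A ⋈^f ⊥`. -/
noncomputable def graphEquiv {A B : Type*} [CommRing A] [CommRing B] (f : A →+* B) :
    A ≃+* amalgamation f (⊥ : Ideal B) where
  toFun a := ⟨(a, f a), by simp [mem_amalgamation]⟩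
  invFun p := (p : A × B).1
  left_inv a := rfl
  right_inv := by
    rintro ⟨⟨a, b⟩, hp⟩
    rw [mem_amalgamation] at hp
    simp only [Ideal.mem_bot, sub_eq_zero] at hp
    exact Subtype.ext (Prod.ext rfl hp.symm)
  map_mul' x y := by ext <;> simp
  map_add' x y := by ext <;> simp

lemma amalgamation_top {A B : Type*} [CommRing A] [CommRing B] (f : A →+* B) :
    amalgamation f (⊤ : Ideal B) = ⊤ := by
  ext p; simp [mem_amalgamation]

/-- `A ⋈^f ⊤ ≃+* A × B`. -/
noncomputable def topAmalgEquiv {A B : Type*} [CommRing A] [CommRing B] (f : A →+* B) :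
    amalgamation f (⊤ : Ideal B) ≃+* A × B :=
  (RingEquiv.subringCongr (amalgamation_top f)).trans Subring.topEquiv

lemma entry_eq {R C : Type*} [CommRing R] [CommRing C] (g : R →+* C)
    (P' Q' : Matrix (Fin 2) (Fin 2) R) (d : Fin 2 → R) (s t : Fin 2) :
    g ((P' * Matrix.diagonal d * Q') s t)
      = g (P' s 0) * g (d 0) * g (Q' 0 t) + g (P' s 1) * g (d 1) * g (Q' 1 t) := by
  simp [Matrix.mul_apply, Matrix.mul_diagonal, Fin.sum_univ_two, map_add, map_mul]

lemma extract1 {C : Type*} [CommRing C] [IsDomain C]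
    (p q : Fin 2 → Fin 2 → C) (dd : Fin 2 → C) (e : Fin 2 → Fin 2 → C) (i : Fin 2)
    (hsingle : ∀ s t, e s t = p s i * dd i * q i t)
    (t₀ t₁ : Fin 2) (h0 : e 0 t₀ ≠ 0) (h1 : e 1 t₀ = 0) (h2 : e 0 t₁ = 0) :
    p 1 i = 0 ∧ q i t₁ = 0 := by
  have hp : p 0 i ≠ 0 := fun hz => h0 (by rw [hsingle, hz, zero_mul, zero_mul])
  have hdd : dd i ≠ 0 := fun hz => h0 (by rw [hsingle, hz, mul_zero, zero_mul])
  have hq : q i t₀ ≠ 0 := fun hz => h0 (by rw [hsingle, hz, mul_zero])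
  constructor
  · have hX := h1; rw [hsingle] at hX
    rcases mul_eq_zero.mp hX with h' | h'
    · rcases mul_eq_zero.mp h' with h'' | h''
      · exact h''
      · exact absurd h'' hdd
    · exact absurd h' hq
  · have hX := h2; rw [hsingle] at hX
    rcases mul_eq_zero.mp hX with h' | h'
    · rcases mul_eq_zero.mp h' with h'' | h''
      · exact absurd h'' hp
      · exact absurd h'' hdd
    · exact h'

lemma unit_row_contra {A B : Type*} [CommRing A] [CommRing B] (f : A →+* B)
    (J : Ideal B) (htop : J ≠ ⊤)
    (W : Matrix (Fin 2) (Fin 2) ↥(amalgamation f J)) (hW : IsUnit W) (r : Fin 2)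
    (h : ∀ c, ((W r c : A × B)).2 ∈ J) : False := by
  have hdet : IsUnit W.det := (Matrix.isUnit_iff_isUnit_det W).mp hW
  have hdetB : IsUnit ((W.det : A × B).2) :=
    hdet.map ((RingHom.snd A B).comp (Subring.subtype _))
  have hmem : ((W.det : A × B)).2 ∈ J := by
    rw [Matrix.det_fin_two]
    have hcoe : (((W 0 0 * W 1 1 - W 0 1 * W 1 0 : ↥(amalgamation f J)) : A × B)).2
        = ((W 0 0 : A × B)).2 * ((W 1 1 : A × B)).2
          - ((W 0 1 : A × B)).2 * ((W 1 0 : A × B)).2 := rfl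
    rw [hcoe]
    fin_cases r
    · exact J.sub_mem (Ideal.mul_mem_right _ _ (h 0)) (Ideal.mul_mem_right _ _ (h 1))
    · exact J.sub_mem (Ideal.mul_mem_left _ _ (h 1)) (Ideal.mul_mem_left _ _ (h 0))
  exact htop (Ideal.eq_top_of_isUnit_mem J hmem hdetB)

lemma not_edr_amalg {A B : Type*} [CommRing A] [IsDomain A] [CommRing B] [IsDomain B]
    (f : A →+* B) (hf : ¬ Function.Injective f) (J : Ideal B)
    (hbot : J ≠ ⊥) (htop : J ≠ ⊤) : ¬ IsElementaryDivisorRing (amalgamation f J) := by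
  intro h
  obtain ⟨a1, b1, hab, hne⟩ := Function.not_injective_iff.mp hf
  set a₀ := a1 - b1 with ha₀def
  have ha0 : a₀ ≠ 0 := sub_ne_zero.mpr hne
  have hfa : f a₀ = 0 := by rw [ha₀def, map_sub, hab, sub_self]
  obtain ⟨j, hjJ, hj0⟩ := (Submodule.ne_bot_iff J).mp hbot
  set x : ↥(amalgamation f J) := ⟨(a₀, (0 : B)), by rw [mem_amalgamation]; simp [hfa]⟩ with hx
  set y : ↥(amalgamation f J) := ⟨((0 : A), j), by rw [mem_amalgamation]; simpa using hjJ⟩ with hy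
  set M : Matrix (Fin 2) (Fin 2) ↥(amalgamation f J) := !![x, y; 0, 0] with hMdef
  obtain ⟨P, Q, hP, hQ, d, hPMQ⟩ := h 2 M
  obtain ⟨u, rfl⟩ := hP
  obtain ⟨v, rfl⟩ := hQ
  have hM : M = (↑u⁻¹ : Matrix (Fin 2) (Fin 2) ↥(amalgamation f J)) * Matrix.diagonal d
      * (↑v⁻¹ : Matrix (Fin 2) (Fin 2) ↥(amalgamation f J)) := by
    rw [← hPMQ]
    calc M = (↑u⁻¹ * ↑u) * M * (↑v * ↑v⁻¹) := by
          rw [Units.inv_mul, Units.mul_inv, one_mul, mul_one]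
      _ = ↑u⁻¹ * (↑u * M * ↑v) * ↑v⁻¹ := by simp only [mul_assoc]
  set P' := (↑u⁻¹ : Matrix (Fin 2) (Fin 2) ↥(amalgamation f J)) with hP'def
  set Q' := (↑v⁻¹ : Matrix (Fin 2) (Fin 2) ↥(amalgamation f J)) with hQ'def
  set πA : ↥(amalgamation f J) →+* A := (RingHom.fst A B).comp (Subring.subtype _) with hπA
  set πB : ↥(amalgamation f J) →+* B := (RingHom.snd A B).comp (Subring.subtype _) with hπB
  -- entry expansions
  have eA : ∀ s t, πA (M s t)
      = πA (P' s 0) * πA (d 0) * πA (Q' 0 t) + πA (P' s 1) * πA (d 1) * πA (Q' 1 t) := by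
    intro s t; rw [hM]; exact entry_eq πA P' Q' d s t
  have eB : ∀ s t, πB (M s t)
      = πB (P' s 0) * πB (d 0) * πB (Q' 0 t) + πB (P' s 1) * πB (d 1) * πB (Q' 1 t) := by
    intro s t; rw [hM]; exact entry_eq πB P' Q' d s t
  -- entries of M
  have hM00 : M 0 0 = x := rfl
  have hM01 : M 0 1 = y := rfl
  have hM10 : M 1 0 = 0 := rfl
  have hM11 : M 1 1 = 0 := rfl
  -- determinant: products of diagonal images vanish
  have hdet0 : M.det = 0 := by rw [hMdef, Matrix.det_fin_two_of]; ring
  have hdetP' : IsUnit P'.det := (Matrix.isUnit_iff_isUnit_det P').mp u⁻¹.isUnit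
  have hdetQ' : IsUnit Q'.det := (Matrix.isUnit_iff_isUnit_det Q').mp v⁻¹.isUnit
  have hdA : πA (d 0) * πA (d 1) = 0 := by
    have h1 : P'.det * (Matrix.diagonal d).det * Q'.det = 0 := by
      rw [← Matrix.det_mul, ← Matrix.det_mul, ← hM, hdet0]
    have h2 : (Matrix.diagonal d).det = d 0 * d 1 := by
      rw [Matrix.det_diagonal, Fin.prod_univ_two]
    have hEq : πA P'.det * (πA (d 0) * πA (d 1)) * πA Q'.det = 0 := by
      simp only [← map_mul]
      rw [← h2, h1, map_zero]
    rcases mul_eq_zero.mp hEq with h' | h'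
    · rcases mul_eq_zero.mp h' with h'' | h''
      · exact absurd h'' (hdetP'.map πA).ne_zero
      · exact h''
    · exact absurd h' (hdetQ'.map πA).ne_zero
  have hdB : πB (d 0) * πB (d 1) = 0 := by
    have h1 : P'.det * (Matrix.diagonal d).det * Q'.det = 0 := by
      rw [← Matrix.det_mul, ← Matrix.det_mul, ← hM, hdet0]
    have h2 : (Matrix.diagonal d).det = d 0 * d 1 := by
      rw [Matrix.det_diagonal, Fin.prod_univ_two]
    have hEq : πB P'.det * (πB (d 0) * πB (d 1)) * πB Q'.det = 0 := by
      simp only [← map_mul]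
      rw [← h2, h1, map_zero]
    rcases mul_eq_zero.mp hEq with h' | h'
    · rcases mul_eq_zero.mp h' with h'' | h''
      · exact absurd h'' (hdetP'.map πB).ne_zero
      · exact h''
    · exact absurd h' (hdetQ'.map πB).ne_zero
  have hxA : πA x = a₀ := rfl
  have hyA : πA y = 0 := rfl
  have hxB : πB x = 0 := rfl
  have hyB : πB y = j := rfl
  obtain ⟨iA, hPA, hQA⟩ : ∃ i, πA (P' 1 i) = 0 ∧ πA (Q' i 1) = 0 := by
    rcases mul_eq_zero.mp hdA with h0 | h1
    · refine ⟨1, extract1 (fun s t => πA (P' s t)) (fun s t => πA (Q' s t))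
        (fun i => πA (d i)) (fun s t => πA (M s t)) 1 ?_ 0 1 ?_ ?_ ?_⟩
      · intro s t
        show πA (M s t) = πA (P' s 1) * πA (d 1) * πA (Q' 1 t)
        rw [eA s t, h0]; ring
      · show πA (M 0 0) ≠ 0; rw [hM00, hxA]; exact ha0
      · show πA (M 1 0) = 0; rw [hM10, map_zero]
      · show πA (M 0 1) = 0; rw [hM01, hyA]
    · refine ⟨0, extract1 (fun s t => πA (P' s t)) (fun s t => πA (Q' s t))
        (fun i => πA (d i)) (fun s t => πA (M s t)) 0 ?_ 0 1 ?_ ?_ ?_⟩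
      · intro s t
        show πA (M s t) = πA (P' s 0) * πA (d 0) * πA (Q' 0 t)
        rw [eA s t, h1]; ring
      · show πA (M 0 0) ≠ 0; rw [hM00, hxA]; exact ha0
      · show πA (M 1 0) = 0; rw [hM10, map_zero]
      · show πA (M 0 1) = 0; rw [hM01, hyA]
  obtain ⟨iB, hPB, hQB⟩ : ∃ i, πB (P' 1 i) = 0 ∧ πB (Q' i 0) = 0 := by
    rcases mul_eq_zero.mp hdB with h0 | h1
    · refine ⟨1, extract1 (fun s t => πB (P' s t)) (fun s t => πB (Q' s t))
        (fun i => πB (d i)) (fun s t => πB (M s t)) 1 ?_ 1 0 ?_ ?_ ?_⟩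
      · intro s t
        show πB (M s t) = πB (P' s 1) * πB (d 1) * πB (Q' 1 t)
        rw [eB s t, h0]; ring
      · show πB (M 0 1) ≠ 0; rw [hM01, hyB]; exact hj0
      · show πB (M 1 1) = 0; rw [hM11, map_zero]
      · show πB (M 0 0) = 0; rw [hM00, hxB]
    · refine ⟨0, extract1 (fun s t => πB (P' s t)) (fun s t => πB (Q' s t))
        (fun i => πB (d i)) (fun s t => πB (M s t)) 0 ?_ 1 0 ?_ ?_ ?_⟩
      · intro s t
        show πB (M s t) = πB (P' s 0) * πB (d 0) * πB (Q' 0 t)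
        rw [eB s t, h1]; ring
      · show πB (M 0 1) ≠ 0; rw [hM01, hyB]; exact hj0
      · show πB (M 1 1) = 0; rw [hM11, map_zero]
      · show πB (M 0 0) = 0; rw [hM00, hxB]
  by_cases hieq : iA = iB
  · refine unit_row_contra f J htop Q' v⁻¹.isUnit iA (fun c => ?_)
    fin_cases c
    · rw [hieq]
      show πB (Q' iB 0) ∈ J
      rw [hQB]; exact J.zero_mem
    · have hmem := (Q' iA 1).prop
      rw [mem_amalgamation] at hmem
      rw [show ((Q' iA 1 : A × B)).1 = 0 from hQA, map_zero, sub_zero] at hmem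
      exact hmem
  · refine unit_row_contra f J htop P' u⁻¹.isUnit 1 (fun c => ?_)
    have hc : c = iA ∨ c = iB := by
      have h1 : (iA : ℕ) ≠ (iB : ℕ) := fun hh => hieq (Fin.ext hh)
      have h2 := c.isLt; have h3 := iA.isLt; have h4 := iB.isLt
      have : (c : ℕ) = iA ∨ (c : ℕ) = iB := by omega
      rcases this with hh | hh
      · exact Or.inl (Fin.ext hh)
      · exact Or.inr (Fin.ext hh)
    rcases hc with rfl | rfl
    · have hmem := (P' 1 c).prop
      rw [mem_amalgamation] at hmem
      rw [show ((P' 1 c : A × B)).1 = 0 from hPA, map_zero, sub_zero] at hmem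
      exact hmem
    · show πB (P' 1 c) ∈ J
      rw [hPB]; exact J.zero_mem


theorem stmt10 {A B : Type*} [CommRing A] [IsDomain A] [CommRing B] [IsDomain B]
    (f : A →+* B) (hf : ¬ Function.Injective f) (J : Ideal B) :
    IsElementaryDivisorRing (amalgamation f J) ↔
      (J = ⊥ ∧ IsElementaryDivisorRing A) ∨
      (J = ⊤ ∧ IsElementaryDivisorRing A ∧ IsElementaryDivisorRing B) := by
  constructor
  · intro h
    by_cases hbot : J = ⊥
    · subst hbot
      exact Or.inl ⟨rfl, edr_of_equiv (graphEquiv f).symm h⟩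
    by_cases htop : J = ⊤
    · subst htop
      have h' := edr_of_equiv (topAmalgEquiv f) h
      exact Or.inr ⟨rfl, edr_of_surjective (RingHom.fst A B) Prod.fst_surjective h',
        edr_of_surjective (RingHom.snd A B) Prod.snd_surjective h'⟩
    · exact absurd h (not_edr_amalg f hf J hbot htop)
  · rintro (⟨rfl, hA⟩ | ⟨rfl, hA, hB⟩)
    · exact edr_of_equiv (graphEquiv f) hA
    · exact edr_of_equiv (topAmalgEquiv f).symm (edr_prod hA hB)
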